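/- Fix k ∈ ℕ with x^k ∈ dom g, and suppose the unique minimizer x̄^k of Θ_k satisfies x̄^k ≠ x^k. Then: (i) every y ∈ dom g sufficiently close to x̄^k satisfies both Θ_k(y) < Θ_k(x^k) and Θ_k(y) − Θ_k(x̄^k) ≤ ε_k‖y − x^k‖², so the inexactness criterion is attainable; and (ii) for any y^k ∈ dom g satisfying this criterion with d^k = y^k − x^k ≠ 0, there exists a nonnegative integer m with F(x^k) − F(x^k + β^m d^k) ≥ σβ^m‖d^k‖², so the Armijo line search terminates. -/

import Mathlib

open Set Filter
open scoped RealInnerProductSpace ENNReal Topology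

noncomputable section

attribute [local instance] Classical.propDecidable

variable {X : Type*} [NormedAddCommGroup X] [InnerProductSpace ℝ X] [FiniteDimensional ℝ X]

/-- `g` extended by `+∞` outside its domain `s`. -/
def extE (g : X → ℝ) (s : Set X) (x : X) : EReal := if x ∈ s then (g x : EReal) else ⊤

/-- The objective `F = f + g`, extended-real valued. -/
def FE (f g : X → ℝ) (s : Set X) (x : X) : EReal := (f x : EReal) + extE g s x

/-- The strongly convex model `Θ_k` with base point `xk` and metric `G`, evaluated at `z`. -/
def Theta (f g : X → ℝ) (fgrad : X → X) (G : X →L[ℝ] X) (xk z : X) : ℝ :=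
  f xk + ⟪fgrad xk, z - xk⟫ + (1/2) * ⟪z - xk, G (z - xk)⟫ + g z

set_option maxHeartbeats 1600000 in
/-- the inexactness criterion is attainable near the exact minimizer `x̄ᵏ`,
and the Armijo line search terminates. -/
theorem vmipg_well_defined
    (f g : X → ℝ) (domg O : Set X) (fgrad : X → X)
    (hdom : domg.Nonempty) (hO : IsOpen O) (hclO : closure domg ⊆ O)
    (hgconv : ConvexOn ℝ domg g) (hgcont : ContinuousOn g domg)
    (hglsc : LowerSemicontinuous (extE g domg))
    (hflsc : LowerSemicontinuous f)
    (hfC2 : ContDiffOn ℝ 2 f O)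
    (hfgrad : ∀ z ∈ O, HasGradientAt f (fgrad z) z)
    (hFlb : ∃ c : ℝ, ∀ z ∈ domg, c ≤ f z + g z)
    (μ σ β : ℝ) (hμ : 0 < μ) (hβ : 0 < β ∧ β < 1) (hσ : 0 < σ ∧ σ < (1/2) * min 1 μ)
    (εk : ℝ) (hεk : 0 < εk)
    (xk : X) (hxk : xk ∈ domg)
    (G : X →L[ℝ] X)
    (hGsa : ∀ u v : X, ⟪G u, v⟫ = ⟪u, G v⟫)
    (hGlb : ∀ u : X, μ * ‖u‖ ^ 2 ≤ ⟪u, G u⟫)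
    (xbar : X)
    (hxbar : xbar ∈ domg ∧ ∀ z ∈ domg, Theta f g fgrad G xk xbar ≤ Theta f g fgrad G xk z)
    (huniq : ∀ z ∈ domg, (∀ w ∈ domg, Theta f g fgrad G xk z ≤ Theta f g fgrad G xk w) → z = xbar)
    (hne : xbar ≠ xk) :
    (∃ δ > (0:ℝ), ∀ yk ∈ domg, ‖yk - xbar‖ < δ →
      Theta f g fgrad G xk yk < Theta f g fgrad G xk xk ∧
      Theta f g fgrad G xk yk - Theta f g fgrad G xk xbar ≤ εk * ‖yk - xk‖ ^ 2) ∧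
    (∀ yk ∈ domg,
      Theta f g fgrad G xk yk < Theta f g fgrad G xk xk →
      Theta f g fgrad G xk yk - Theta f g fgrad G xk xbar ≤ εk * ‖yk - xk‖ ^ 2 →
      yk - xk ≠ 0 →
      ∃ mm : ℕ, FE f g domg (xk + β ^ mm • (yk - xk)) ≤
        ((f xk + g xk - σ * β ^ mm * ‖yk - xk‖ ^ 2 : ℝ) : EReal)) := by
  obtain ⟨hβ0, hβ1⟩ := hβ
  obtain ⟨hσ0, hσlt⟩ := hσ
  obtain ⟨hxbarmem, hxbarmin⟩ := hxbar
  have hxkO : xk ∈ O := hclO (subset_closure hxk)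
  have hσμ : σ < μ / 2 := by
    have h1 : min 1 μ ≤ μ := min_le_right 1 μ
    nlinarith
  have hΘxk : Theta f g fgrad G xk xk = f xk + g xk := by
    simp [Theta]
  -- gap at the minimizer
  have hu0 : (0:ℝ) < ‖xbar - xk‖ := by
    rw [norm_pos_iff]; exact sub_ne_zero.mpr hne
  have hQu : μ * ‖xbar - xk‖ ^ 2 ≤ ⟪xbar - xk, G (xbar - xk)⟫ := hGlb _
  have hmidmem : (1/2:ℝ) • xbar + (1/2:ℝ) • xk ∈ domg :=
    hgconv.1 hxbarmem hxk (by norm_num) (by norm_num) (by norm_num)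
  have hgmid : g ((1/2:ℝ) • xbar + (1/2:ℝ) • xk) ≤ (1/2) * g xbar + (1/2) * g xk :=
    hgconv.2 hxbarmem hxk (by norm_num) (by norm_num) (by norm_num)
  have hsub : ((1/2:ℝ) • xbar + (1/2:ℝ) • xk) - xk = (1/2:ℝ) • (xbar - xk) := by
    module
  have hΘmid : Theta f g fgrad G xk ((1/2:ℝ) • xbar + (1/2:ℝ) • xk)
      = f xk + (1/2) * ⟪fgrad xk, xbar - xk⟫
        + (1/2) * ((1/2) * ((1/2) * ⟪xbar - xk, G (xbar - xk)⟫))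
        + g ((1/2:ℝ) • xbar + (1/2:ℝ) • xk) := by
    rw [Theta, hsub]
    simp only [map_smul, real_inner_smul_left, real_inner_smul_right,
      ContinuousLinearMap.map_smul, smul_eq_mul]
  have hΘxbar : Theta f g fgrad G xk xbar
      = f xk + ⟪fgrad xk, xbar - xk⟫ + (1/2) * ⟪xbar - xk, G (xbar - xk)⟫ + g xbar := rfl
  have hgap : Theta f g fgrad G xk xbar + (μ/4) * ‖xbar - xk‖ ^ 2
      ≤ Theta f g fgrad G xk xk := by
    have h1 := hxbarmin _ hmidmem
    rw [hΘmid] at h1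
    rw [hΘxbar, hΘxk]
    linarith
  constructor
  · -- Part (i)
    have hcont : ContinuousWithinAt (Theta f g fgrad G xk) domg xbar := by
      have h1 : Continuous fun z : X =>
          f xk + ⟪fgrad xk, z - xk⟫ + (1/2) * ⟪z - xk, G (z - xk)⟫ := by
        have hc1 : Continuous fun z : X => z - xk := continuous_id.sub continuous_const
        exact ((continuous_const.add (continuous_const.inner hc1)).add
          (continuous_const.mul (hc1.inner (G.continuous.comp hc1))))
      exact h1.continuousWithinAt.add (hgcont xbar hxbarmem)
    set ε' := min ((μ/8) * ‖xbar - xk‖ ^ 2) ((εk/4) * ‖xbar - xk‖ ^ 2) with hε'def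
    have hε'pos : 0 < ε' := by
      apply lt_min <;> positivity
    obtain ⟨δ₁, hδ₁pos, hδ₁⟩ := Metric.continuousWithinAt_iff.mp hcont ε' hε'pos
    refine ⟨min δ₁ (‖xbar - xk‖ / 2), lt_min hδ₁pos (by positivity), ?_⟩
    intro yk hyk hyknear
    have hd1 : dist yk xbar < δ₁ := by
      rw [dist_eq_norm]; exact lt_of_lt_of_le hyknear (min_le_left _ _)
    have hΘnear : |Theta f g fgrad G xk yk - Theta f g fgrad G xk xbar| < ε' := by
      have := hδ₁ hyk hd1
      rwa [Real.dist_eq] at this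
    have hΘnear' : Theta f g fgrad G xk yk - Theta f g fgrad G xk xbar < ε' :=
      lt_of_abs_lt hΘnear
    have hεa : ε' ≤ (μ/8) * ‖xbar - xk‖ ^ 2 := min_le_left _ _
    have hεb : ε' ≤ (εk/4) * ‖xbar - xk‖ ^ 2 := min_le_right _ _
    have hfar : ‖xbar - xk‖ / 2 ≤ ‖yk - xk‖ := by
      have htri : ‖xbar - xk‖ ≤ ‖xbar - yk‖ + ‖yk - xk‖ := by
        simpa using norm_sub_le_norm_sub_add_norm_sub xbar yk xk
      have : ‖xbar - yk‖ < ‖xbar - xk‖ / 2 := by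
        rw [norm_sub_rev]
        exact lt_of_lt_of_le hyknear (min_le_right _ _)
      linarith
    have hfar2 : (‖xbar - xk‖ / 2) ^ 2 ≤ ‖yk - xk‖ ^ 2 := by
      apply sq_le_sq' <;> [linarith [norm_nonneg (yk - xk)]; exact hfar]
    constructor
    · nlinarith
    · nlinarith
  · -- Part (ii)
    intro yk hyk hΘlt _ hd
    have hd0 : (0:ℝ) < ‖yk - xk‖ := by rwa [norm_pos_iff]
    have hkey : ⟪fgrad xk, yk - xk⟫ + g yk - g xk
        < -(1/2) * ⟪yk - xk, G (yk - xk)⟫ := by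
      have hΘyk : Theta f g fgrad G xk yk
          = f xk + ⟪fgrad xk, yk - xk⟫ + (1/2) * ⟪yk - xk, G (yk - xk)⟫ + g yk := rfl
      rw [hΘyk, hΘxk] at hΘlt; linarith
    have hQd : μ * ‖yk - xk‖ ^ 2 ≤ ⟪yk - xk, G (yk - xk)⟫ := hGlb _
    have hηpos : 0 < (μ/2 - σ) * ‖yk - xk‖ ^ 2 :=
      mul_pos (by linarith) (by positivity)
    -- derivative of t ↦ f (xk + t • (yk - xk)) at 0
    have hfd : HasGradientAt f (fgrad xk) xk := hfgrad xk hxkO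
    have hcurve : HasDerivAt (fun s : ℝ => xk + s • (yk - xk)) (yk - xk) 0 := by
      simpa using ((hasDerivAt_id (0:ℝ)).smul_const (yk - xk)).const_add xk
    have hφ : HasDerivAt (fun t : ℝ => f (xk + t • (yk - xk))) ⟪fgrad xk, yk - xk⟫ 0 := by
      have h0 : HasFDerivAt f ((InnerProductSpace.toDual ℝ X) (fgrad xk))
          (xk + (0:ℝ) • (yk - xk)) := by
        simpa using hfd.hasFDerivAt
      have := h0.comp_hasDerivAt (0:ℝ) hcurve
      simp at this; exact this
    have hslope := hasDerivAt_iff_tendsto_slope.mp hφ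
    have hev : ∀ᶠ t in 𝓝[≠] (0:ℝ), slope (fun t : ℝ => f (xk + t • (yk - xk))) 0 t
        < ⟪fgrad xk, yk - xk⟫ + (μ/2 - σ) * ‖yk - xk‖ ^ 2 :=
      hslope.eventually_lt_const (by linarith)
    have hpow : Tendsto (fun m : ℕ => β ^ m) atTop (𝓝[≠] (0:ℝ)) := by
      apply tendsto_nhdsWithin_of_tendsto_nhds_of_eventually_within
      · exact tendsto_pow_atTop_nhds_zero_of_lt_one hβ0.le hβ1
      · exact Filter.Eventually.of_forall fun m => (pow_pos hβ0 m).ne'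
    obtain ⟨m, hm⟩ := (hpow.eventually hev).exists
    refine ⟨m, ?_⟩
    have ht0 : (0:ℝ) < β ^ m := pow_pos hβ0 m
    have ht1 : β ^ m ≤ 1 := pow_le_one₀ hβ0.le hβ1.le
    have hfz : f (xk + β ^ m • (yk - xk)) - f xk
        < β ^ m * (⟪fgrad xk, yk - xk⟫ + (μ/2 - σ) * ‖yk - xk‖ ^ 2) := by
      have hs : slope (fun t : ℝ => f (xk + t • (yk - xk))) 0 (β ^ m)
          = (f (xk + β ^ m • (yk - xk)) - f xk) / β ^ m := by
        rw [slope_def_field]; simp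
      rw [hs, div_lt_iff₀ ht0] at hm
      linarith
    have hzeq : xk + β ^ m • (yk - xk) = (1 - β ^ m) • xk + β ^ m • yk := by
      module
    have hzmem : xk + β ^ m • (yk - xk) ∈ domg := by
      rw [hzeq]
      exact hgconv.1 hxk hyk (by linarith) ht0.le (by ring)
    have hgz : g (xk + β ^ m • (yk - xk)) ≤ (1 - β ^ m) * g xk + β ^ m * g yk := by
      rw [hzeq]
      exact hgconv.2 hxk hyk (by linarith) ht0.le (by ring)
    have hreal : f (xk + β ^ m • (yk - xk)) + g (xk + β ^ m • (yk - xk))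
        ≤ f xk + g xk - σ * β ^ m * ‖yk - xk‖ ^ 2 := by
      have h1 : β ^ m * (⟪fgrad xk, yk - xk⟫ + g yk - g xk)
          ≤ β ^ m * (-(1/2) * ⟪yk - xk, G (yk - xk)⟫) :=
        mul_le_mul_of_nonneg_left hkey.le ht0.le
      have h2 : β ^ m * (μ * ‖yk - xk‖ ^ 2) ≤ β ^ m * ⟪yk - xk, G (yk - xk)⟫ :=
        mul_le_mul_of_nonneg_left hQd ht0.le
      nlinarith [h1, h2, hfz, hgz]
    rw [FE, extE, if_pos hzmem, ← EReal.coe_add]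
    exact EReal.coe_le_coe_iff.mpr hreal
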